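/- Let V be a finite-dimensional real vector space and B ⊆ V a closed subset that is star-shaped about the origin (i.e., for all b ∈ B and t ∈ [0,1], t•b ∈ B). If B is not compact, then there exists v ∈ V, v ≠ 0, such that the ray ℝ≥0·v is contained in B. -/
import Mathlib


/-- Let `V` be a finite-dimensional real vector space and `B ⊆ V` a closed
subset that is star-shaped about the origin.  If `B` is not compact, then there exists a
nonzero `v ∈ V` such that the ray `ℝ≥0 • v` is contained in `B`. -/
theorem stmt_0 {V : Type*} [NormedAddCommGroup V] [NormedSpace ℝ V] [FiniteDimensional ℝ V]
    (B : Set V) (hB : IsClosed B)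
    (hstar : ∀ b ∈ B, ∀ t : ℝ, t ∈ Set.Icc (0 : ℝ) 1 → t • b ∈ B)
    (hnc : ¬ IsCompact B) :
    ∃ v : V, v ≠ 0 ∧ ∀ t : ℝ, 0 ≤ t → t • v ∈ B := by
  -- B is unbounded
  have hub : ¬ Bornology.IsBounded B := fun h => hnc (Metric.isCompact_of_isClosed_isBounded hB h)
  rw [isBounded_iff_forall_norm_le] at hub
  push_neg at hub
  choose b hbB hbn using fun n : ℕ => hub n
  have hbpos : ∀ n : ℕ, 0 < ‖b n‖ := fun n => lt_of_le_of_lt (Nat.cast_nonneg n) (hbn n)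
  set u : ℕ → V := fun n => ‖b n‖⁻¹ • b n with hu
  have husphere : ∀ n, u n ∈ Metric.sphere (0 : V) 1 := by
    intro n
    simp [hu, norm_smul, abs_of_pos (hbpos n), inv_mul_cancel₀ (hbpos n).ne']
  obtain ⟨v, hv, φ, hφ, hconv⟩ := (isCompact_sphere (0 : V) 1).tendsto_subseq husphere
  have hvnorm : ‖v‖ = 1 := by simpa using hv
  refine ⟨v, by simp [← norm_pos_iff, hvnorm], fun t ht => ?_⟩
  have hmem : ∀ᶠ n in Filter.atTop, t • u n ∈ B := by
    obtain ⟨N, hN⟩ := exists_nat_ge t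
    filter_upwards [Filter.eventually_ge_atTop N] with n hn
    have hle : t ≤ ‖b n‖ := le_trans (hN.trans (Nat.cast_le.mpr hn)) (hbn n).le
    have : t • u n = (t * ‖b n‖⁻¹) • b n := by rw [hu, smul_smul]
    rw [this]
    refine hstar _ (hbB n) _ ⟨mul_nonneg ht (inv_nonneg.mpr (hbpos n).le), ?_⟩
    rw [← div_eq_mul_inv, div_le_one (hbpos n)]
    exact hle
  have hmem' : ∀ᶠ n in Filter.atTop, t • u (φ n) ∈ B :=
    hφ.tendsto_atTop.eventually hmem
  exact hB.mem_of_tendsto ((hconv.const_smul t)) hmem'
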